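/- arXiv:math/0407352 — 2 statements merged into one kernel-verified Lean document; each statement's English description precedes it below -/
import Mathlib

section
/- Let (X, α) be a partial dynamical system such that α is injective on the inverse image of Δ₋∞ = ⋂_{n∈ℕ} Δ₋ₙ (i.e., |α⁻¹(x)| = 1 for every x ∈ Δ₋∞). Then every subset Ũ ⊆ X̃ is determined by its sections: Ũ = (U₀ × (U₁ ∪ {0}) × ... × (Uₙ ∪ {0}) × ...) ∩ X̃, where Uₙ = Φₙ(Ũ ∩ Δ̃₋ₙ) is the n-section of Ũ. -/
open Set

variable {X : Type*}

/-- `pdsDom α Δ n` is the domain `Δₙ` of the `n`-th iterate of the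
partial map `α : Δ → X`. -/
def pdsDom (α : X → X) (Δ : Set X) : ℕ → Set X
  | 0 => Set.univ
  | n + 1 => Δ ∩ α ⁻¹' pdsDom α Δ n

/-- The point `0` adjoined to `X`: we realize `X ∪ {0}` as `X ⊕ Unit`,
with `0 := Sum.inr ()`. -/
abbrev pdsZero (X : Type*) : X ⊕ Unit := Sum.inr ()

/-- The set `X_∞` of infinite anti-orbits of `(X, α)`, inside the
product `∏_{n ∈ ℕ} (X ∪ {0})`. -/
def XInf (α : X → X) (Δ : Set X) : Set (ℕ → X ⊕ Unit) :=
  {p | (∀ n, ∃ x, p n = Sum.inl x ∧ x ∈ pdsDom α Δ n) ∧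
       (∀ n x, p (n + 1) = Sum.inl x → x ∈ Δ ∧ p n = Sum.inl (α x))}

/-- The set `X_N` of anti-orbits of length exactly `N`: sequences
`(x₀, …, x_N, 0, 0, …)` with `xₙ ∈ Δₙ`, `α xₙ = x_{n-1}` and `x_N ∉ α(Δ)`. -/
def XN (α : X → X) (Δ : Set X) (N : ℕ) : Set (ℕ → X ⊕ Unit) :=
  {p | (∀ n ≤ N, ∃ x, p n = Sum.inl x ∧ x ∈ pdsDom α Δ n) ∧
       (∀ n, N < n → p n = pdsZero X) ∧
       (∀ n x, p (n + 1) = Sum.inl x → x ∈ Δ ∧ p n = Sum.inl (α x)) ∧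
       (∀ x, p N = Sum.inl x → x ∉ α '' Δ)}

/-- The `α`-extension `X̃ = ⋃_N X_N ∪ X_∞` of `X`. -/
def Xtilde (α : X → X) (Δ : Set X) : Set (ℕ → X ⊕ Unit) :=
  (⋃ N, XN α Δ N) ∪ XInf α Δ

/-- The map `α̃ : (x₀, x₁, …) ↦ (α x₀, x₀, x₁, …)` on sequences. -/
def tShift (α : X → X) : (ℕ → X ⊕ Unit) → (ℕ → X ⊕ Unit) :=
  fun p n => Nat.casesOn n (Sum.map α id (p 0)) fun k => p k

/-- The backwards shift `(x₀, x₁, x₂, …) ↦ (x₁, x₂, …)`. -/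
def bShift : (ℕ → X ⊕ Unit) → (ℕ → X ⊕ Unit) := fun p n => p (n + 1)

/-- The domain `Δ̃₁ = {x̃ ∈ X̃ : x₀ ∈ Δ₁}` of `α̃`. -/
def tDelta1 (α : X → X) (Δ : Set X) : Set (ℕ → X ⊕ Unit) :=
  {p | p ∈ Xtilde α Δ ∧ ∃ x ∈ Δ, p 0 = Sum.inl x}

/-- The image `Δ̃₋₁ = {x̃ ∈ X̃ : x₁ ≠ 0}` of `α̃`. -/
def tDeltaM1 (α : X → X) (Δ : Set X) : Set (ℕ → X ⊕ Unit) :=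
  {p | p ∈ Xtilde α Δ ∧ p 1 ≠ pdsZero X}

/-- `V` is invariant under the partial map `α : Δ → X`:
`αⁿ(V ∩ Δₙ) = V ∩ Δ₋ₙ` for all `n ∈ ℕ`. -/
def PdsInvariant (α : X → X) (Δ : Set X) (V : Set X) : Prop :=
  ∀ n : ℕ, α^[n] '' (V ∩ pdsDom α Δ n) = V ∩ α^[n] '' pdsDom α Δ n

/-- The set `Fₙ = {x ∈ Δₙ : αⁿ x = x}` of `n`-periodic points. -/
def pdsFix (α : X → X) (Δ : Set X) (n : ℕ) : Set X :=
  {x | x ∈ pdsDom α Δ n ∧ α^[n] x = x}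

/-- Topological freedom of the partial map `α : Δ → X`: for every `n > 0`,
every nonempty relatively open subset of `Fₙ` contains a point `x` with
`|α⁻ᵏ(x)| > 1` for some `1 ≤ k ≤ n`. -/
def TopFree [TopologicalSpace X] (α : X → X) (Δ : Set X) : Prop :=
  ∀ n : ℕ, 0 < n → ∀ W : Set X, IsOpen W → (W ∩ pdsFix α Δ n).Nonempty →
    ∃ x ∈ W ∩ pdsFix α Δ n, ∃ k, 1 ≤ k ∧ k ≤ n ∧
      ∃ y z, y ∈ pdsDom α Δ k ∧ z ∈ pdsDom α Δ k ∧
        α^[k] y = x ∧ α^[k] z = x ∧ y ≠ z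


private lemma pds_dom_succ_subset (α : X → X) (Δ : Set X) :
    ∀ n, pdsDom α Δ (n + 1) ⊆ pdsDom α Δ n := by
  intro n
  induction n with
  | zero => intro x _; trivial
  | succ n ih => intro x hx; exact ⟨hx.1, ih hx.2⟩

private lemma pds_dom_le (α : X → X) (Δ : Set X) {m n : ℕ} (h : m ≤ n) :
    pdsDom α Δ n ⊆ pdsDom α Δ m := by
  induction h with
  | refl => exact subset_rfl
  | step h ih => exact (pds_dom_succ_subset α Δ _).trans ih

private lemma recur_of_mem {α : X → X} {Δ : Set X} {p : ℕ → X ⊕ Unit}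
    (hp : p ∈ Xtilde α Δ) :
    ∀ n x, p (n + 1) = Sum.inl x → x ∈ Δ ∧ p n = Sum.inl (α x) := by
  rcases hp with h | h
  · obtain ⟨N, hN⟩ := mem_iUnion.mp h
    exact hN.2.2.1
  · exact h.2

private lemma back_iter {α : X → X} {Δ : Set X} {p : ℕ → X ⊕ Unit}
    (hR : ∀ n x, p (n + 1) = Sum.inl x → x ∈ Δ ∧ p n = Sum.inl (α x)) :
    ∀ k m x, p (m + k) = Sum.inl x → p m = Sum.inl (α^[k] x) := by
  intro k
  induction k with
  | zero => intro m x h; rw [Function.iterate_zero_apply]; exact h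
  | succ k ih =>
    intro m x h
    have h2 := (hR (m + k) x h).2
    have h3 := ih m (α x) h2
    rwa [← Function.iterate_succ_apply] at h3

/-- If `α` is injective on the preimage of `Δ₋∞ = ⋂ₙ Δ₋ₙ`, then every subset
`Ũ ⊆ X̃` is determined by its sections `Uₙ = Φₙ(Ũ ∩ Δ̃₋ₙ)`:
`Ũ = (U₀ × (U₁ ∪ {0}) × ⋯) ∩ X̃`. -/
theorem subset_eq_of_sections {X : Type*} [TopologicalSpace X] [CompactSpace X]
    [T2Space X] (Δ : Set X) (hΔ : IsClopen Δ) (α : X → X) (hα : ContinuousOn α Δ)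
    (hinj : ∀ x ∈ ⋂ n : ℕ, α^[n] '' pdsDom α Δ n,
      ∀ y ∈ Δ, ∀ z ∈ Δ, α y = x → α z = x → y = z)
    (U : Set (ℕ → X ⊕ Unit)) (hU : U ⊆ Xtilde α Δ) :
    U = {p | p ∈ Xtilde α Δ ∧
          ∀ n x, p n = Sum.inl x → x ∈ {w | ∃ q ∈ U, q n = Sum.inl w}} := by
  ext p
  constructor
  · intro hp
    exact ⟨hU hp, fun n x hx => ⟨p, hp, hx⟩⟩
  rintro ⟨hpX, hsec⟩
  have hRp := recur_of_mem hpX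
  rcases hpX with hfin | hinf
  · obtain ⟨N, hN⟩ := mem_iUnion.mp hfin
    obtain ⟨xN, hxN, hxNdom⟩ := hN.1 N le_rfl
    obtain ⟨q, hqU, hqN⟩ := hsec N xN hxN
    have hqX := hU hqU
    have hRq := recur_of_mem hqX
    -- coordinates ≤ N agree
    have hle : ∀ m ≤ N, q m = p m := by
      intro m hm
      obtain ⟨k, rfl⟩ := Nat.le.dest hm
      rw [back_iter hRq k m xN hqN, back_iter hRp k m xN hxN]
    -- q is not infinite
    have hqfin : q ∈ ⋃ M, XN α Δ M := by
      rcases hqX with h | h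
      · exact h
      · exfalso
        obtain ⟨y, hy, _⟩ := h.1 (N + 1)
        have := hRq N y hy
        rw [hqN] at this
        exact hN.2.2.2 xN hxN ⟨y, this.1, (Sum.inl.injEq _ _).mp this.2.symm⟩
    obtain ⟨M, hM⟩ := mem_iUnion.mp hqfin
    have hNM : N ≤ M := by
      by_contra h
      have := hM.2.1 N (Nat.lt_of_not_le h)
      rw [hqN] at this
      exact Sum.inl_ne_inr this
    have hMN : M ≤ N := by
      by_contra h
      obtain ⟨y, hy, _⟩ := hM.1 (N + 1) (Nat.lt_of_not_le h)
      have := hRq N y hy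
      rw [hqN] at this
      exact hN.2.2.2 xN hxN ⟨y, this.1, (Sum.inl.injEq _ _).mp this.2.symm⟩
    have hMeq : M = N := le_antisymm hMN hNM
    have : q = p := by
      funext m
      rcases le_or_gt m N with hm | hm
      · exact hle m hm
      · rw [hM.2.1 m (hMeq ▸ hm), hN.2.1 m hm]
    rwa [← this]
  · -- infinite case
    obtain ⟨x0, hx0, _⟩ := hinf.1 0
    obtain ⟨q, hqU, hq0⟩ := hsec 0 x0 hx0
    have hqX := hU hqU
    have hRq := recur_of_mem hqX
    -- each coordinate of p lies in Δ₋∞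
    have hDinf : ∀ n x, p n = Sum.inl x → x ∈ ⋂ m : ℕ, α^[m] '' pdsDom α Δ m := by
      intro n x hx
      refine mem_iInter.mpr fun m => ?_
      obtain ⟨y, hy, hydom⟩ := hinf.1 (n + m)
      have := back_iter hRp m n y hy
      rw [hx] at this
      exact ⟨y, pds_dom_le α Δ (Nat.le_add_left m n) hydom,
        ((Sum.inl.injEq _ _).mp this).symm⟩
    have key : ∀ n, q n = p n := by
      intro n
      induction n with
      | zero => rw [hq0, hx0]
      | succ n ih =>
        obtain ⟨xn, hxn, _⟩ := hinf.1 n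
        obtain ⟨xn1, hxn1, hxn1dom⟩ := hinf.1 (n + 1)
        have hrec := hRp n xn1 hxn1
        have hxn1Δ : xn1 ∈ Δ := hrec.1
        have haxn1 : α xn1 = xn := by
          rw [hxn] at hrec
          exact ((Sum.inl.injEq _ _).mp hrec.2).symm
        -- q (n+1) is nonzero
        have hq1 : ∃ y, q (n + 1) = Sum.inl y := by
          rcases hqX with h | h
          · obtain ⟨M, hM⟩ := mem_iUnion.mp h
            have hqn : q n = Sum.inl xn := by rw [ih, hxn]
            have hnM : n ≤ M := by
              by_contra hc
              have := hM.2.1 n (Nat.lt_of_not_le hc)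
              rw [hqn] at this
              exact Sum.inl_ne_inr this
            rcases eq_or_lt_of_le hnM with rfl | hlt
            · exfalso
              exact hM.2.2.2 xn hqn ⟨xn1, hxn1Δ, haxn1⟩
            · obtain ⟨y, hy, _⟩ := hM.1 (n + 1) hlt
              exact ⟨y, hy⟩
          · obtain ⟨y, hy, _⟩ := h.1 (n + 1)
            exact ⟨y, hy⟩
        obtain ⟨y, hy⟩ := hq1
        have hrecq := hRq n y hy
        have hay : α y = xn := by
          rw [ih, hxn] at hrecq
          exact ((Sum.inl.injEq _ _).mp hrecq.2).symm
        have hyx : y = xn1 :=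
          hinj xn (hDinf n xn hxn) y hrecq.1 xn1 hxn1Δ hay haxn1
        rw [hy, hyx, hxn1]
    have : q = p := funext key
    rwa [← this]
end

section
/- A partial dynamical system (X, α) with Δ₋₁ open is minimal (has no closed α-invariant subsets other than ∅ and X) if and only if its reversible extension (X̃, α̃) is minimal. -/
open Set

variable {X : Type*}

section Aux

variable {α : X → X} {Δ : Set X}

lemma sum_cases (a : X ⊕ Unit) : (∃ x, a = Sum.inl x) ∨ a = pdsZero X := by
  rcases a with x | u
  · exact Or.inl ⟨x, rfl⟩
  · exact Or.inr (by simp [pdsZero])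

lemma mem_pdsDom_add (m n : ℕ) (x : X) :
    x ∈ pdsDom α Δ (m + n) ↔ x ∈ pdsDom α Δ m ∧ α^[m] x ∈ pdsDom α Δ n := by
  induction m generalizing x with
  | zero => simp [pdsDom]
  | succ m ih =>
    have : m + 1 + n = (m + n) + 1 := by omega
    rw [this]
    show x ∈ Δ ∩ α ⁻¹' pdsDom α Δ (m + n) ↔ _
    constructor
    · rintro ⟨hx, hx2⟩
      rcases (ih (α x)).1 hx2 with ⟨h1, h2⟩
      exact ⟨⟨hx, h1⟩, by rwa [Function.iterate_succ_apply]⟩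
    · rintro ⟨⟨hx, h1⟩, h2⟩
      exact ⟨hx, (ih (α x)).2 ⟨h1, by rwa [Function.iterate_succ_apply] at h2⟩⟩

lemma pdsDom_anti {m n : ℕ} (h : m ≤ n) : pdsDom α Δ n ⊆ pdsDom α Δ m := by
  intro x hx
  obtain ⟨k, rfl⟩ := Nat.exists_eq_add_of_le h
  exact ((mem_pdsDom_add m k x).1 hx).1

lemma pdsDom_subset_delta {n : ℕ} (h : 1 ≤ n) : pdsDom α Δ n ⊆ Δ := by
  intro x hx
  exact (pdsDom_anti h hx : x ∈ pdsDom α Δ 1).1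

lemma mem_pdsDom_succ {n : ℕ} {x : X} :
    x ∈ pdsDom α Δ (n + 1) ↔ x ∈ Δ ∧ α x ∈ pdsDom α Δ n := Iff.rfl

/-- the "chain" condition -/
lemma xt_chain {p : ℕ → X ⊕ Unit} (hp : p ∈ Xtilde α Δ) :
    ∀ n x, p (n + 1) = Sum.inl x → x ∈ Δ ∧ p n = Sum.inl (α x) := by
  rcases hp with hp | hp
  · rcases mem_iUnion.1 hp with ⟨N, h1, h2, h3, h4⟩
    exact h3
  · exact hp.2

lemma xt_nonzero0 {p : ℕ → X ⊕ Unit} (hp : p ∈ Xtilde α Δ) :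
    ∃ x, p 0 = Sum.inl x := by
  rcases hp with hp | hp
  · rcases mem_iUnion.1 hp with ⟨N, h1, h2, h3, h4⟩
    rcases h1 0 (Nat.zero_le N) with ⟨x, hx, -⟩
    exact ⟨x, hx⟩
  · rcases hp.1 0 with ⟨x, hx, -⟩
    exact ⟨x, hx⟩

lemma xt_stop {p : ℕ → X ⊕ Unit} (hp : p ∈ Xtilde α Δ) {n : ℕ} {x : X}
    (h1 : p n = Sum.inl x) (h2 : p (n + 1) = pdsZero X) : x ∉ α '' Δ := by
  rcases hp with hp | hp
  · rcases mem_iUnion.1 hp with ⟨N, c1, c2, c3, c4⟩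
    rcases Nat.lt_or_ge N (n + 1) with h | h
    · rcases Nat.lt_or_ge N n with h' | h'
      · rw [c2 n h'] at h1; simp [pdsZero] at h1
      · have : n = N := le_antisymm h' (by omega)
        subst this
        exact c4 x h1
    · rcases c1 (n+1) h with ⟨y, hy, -⟩
      rw [h2] at hy; simp [pdsZero] at hy
  · rcases hp.1 (n + 1) with ⟨y, hy, -⟩
    rw [h2] at hy; simp [pdsZero] at hy

lemma chain_dom {p : ℕ → X ⊕ Unit}
    (hc : ∀ n x, p (n + 1) = Sum.inl x → x ∈ Δ ∧ p n = Sum.inl (α x)) :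
    ∀ n x, p n = Sum.inl x → x ∈ pdsDom α Δ n := by
  intro n
  induction n with
  | zero => intro x _; trivial
  | succ n ih =>
    intro x hx
    obtain ⟨hxΔ, hpn⟩ := hc n x hx
    exact ⟨hxΔ, ih _ hpn⟩

lemma xt_coord_dom {p : ℕ → X ⊕ Unit} (hp : p ∈ Xtilde α Δ) {n : ℕ} {x : X}
    (h : p n = Sum.inl x) : x ∈ pdsDom α Δ n :=
  chain_dom (xt_chain hp) n x h

lemma chain_zero_stable {p : ℕ → X ⊕ Unit}
    (hc : ∀ n x, p (n + 1) = Sum.inl x → x ∈ Δ ∧ p n = Sum.inl (α x))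
    {n : ℕ} (h : p n = pdsZero X) : ∀ m, n ≤ m → p m = pdsZero X := by
  intro m hm
  obtain ⟨k, rfl⟩ := Nat.exists_eq_add_of_le hm
  induction k with
  | zero => exact h
  | succ k ih =>
    rcases sum_cases (p (n + k + 1)) with ⟨x, hx⟩ | hz
    · obtain ⟨-, h'⟩ := hc (n + k) x hx
      rw [ih (by omega)] at h'
      simp [pdsZero] at h'
    · exact hz

lemma xt_zero_stable {p : ℕ → X ⊕ Unit} (hp : p ∈ Xtilde α Δ) {n : ℕ}
    (h : p n = pdsZero X) : ∀ m, n ≤ m → p m = pdsZero X :=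
  chain_zero_stable (xt_chain hp) h

lemma xt_coord_chain {p : ℕ → X ⊕ Unit} (hp : p ∈ Xtilde α Δ) {n k : ℕ} {x : X}
    (h : p (n + k) = Sum.inl x) : p n = Sum.inl (α^[k] x) := by
  induction k generalizing x with
  | zero => simpa using h
  | succ k ih =>
    obtain ⟨-, h'⟩ := xt_chain hp (n + k) x h
    have := ih h'
    rwa [← Function.iterate_succ_apply] at this

lemma mem_Xtilde_of {p : ℕ → X ⊕ Unit}
    (h0 : ∃ x, p 0 = Sum.inl x)
    (hc : ∀ n x, p (n + 1) = Sum.inl x → x ∈ Δ ∧ p n = Sum.inl (α x))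
    (hs : ∀ n x, p n = Sum.inl x → p (n + 1) = pdsZero X → x ∉ α '' Δ) :
    p ∈ Xtilde α Δ := by
  classical
  by_cases hall : ∀ n, ∃ x, p n = Sum.inl x
  · exact Or.inr ⟨fun n => by
      rcases hall n with ⟨x, hx⟩
      exact ⟨x, hx, chain_dom hc n x hx⟩, hc⟩
  · push_neg at hall
    obtain ⟨m, hm⟩ := hall
    have hmz : p m = pdsZero X := by
      rcases sum_cases (p m) with ⟨x, hx⟩ | hz
      · exact absurd hx (hm x)
      · exact hz
    have hex : ∃ k, p k = pdsZero X := ⟨m, hmz⟩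
    set k := Nat.find hex with hk
    have hkz : p k = pdsZero X := Nat.find_spec hex
    have hk1 : 1 ≤ k := by
      rcases h0 with ⟨x, hx⟩
      rcases Nat.eq_zero_or_pos k with h | h
      · rw [h] at hkz; rw [hkz] at hx; simp [pdsZero] at hx
      · exact h
    refine Or.inl (mem_iUnion.2 ⟨k - 1, ?_, ?_, hc, ?_⟩)
    · intro n hn
      have hnk : n < k := by omega
      rcases sum_cases (p n) with ⟨x, hx⟩ | hz
      · exact ⟨x, hx, chain_dom hc n x hx⟩
      · exact absurd hz (Nat.find_min hex hnk)
    · intro n hn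
      exact chain_zero_stable hc hkz n (by omega)
    · intro x hx
      refine hs (k-1) x hx ?_
      have : k - 1 + 1 = k := by omega
      rw [this]; exact hkz

@[simp] lemma tShift_zero (p : ℕ → X ⊕ Unit) :
    tShift α p 0 = Sum.map α id (p 0) := rfl

@[simp] lemma tShift_succ (p : ℕ → X ⊕ Unit) (n : ℕ) :
    tShift α p (n + 1) = p n := rfl

lemma bShift_tShift (p : ℕ → X ⊕ Unit) : bShift (tShift α p) = p := rfl

lemma tShift_mem_Xtilde {p : ℕ → X ⊕ Unit} (hp : p ∈ tDelta1 α Δ) :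
    tShift α p ∈ Xtilde α Δ := by
  obtain ⟨hpX, x, hxΔ, h0⟩ := hp
  apply mem_Xtilde_of
  · exact ⟨α x, by simp [h0]⟩
  · intro n y hy
    cases n with
    | zero =>
      simp only [tShift_succ] at hy
      rw [h0] at hy
      obtain rfl : x = y := by simpa using hy
      exact ⟨hxΔ, by simp [h0]⟩
    | succ n =>
      simp only [tShift_succ] at hy ⊢
      exact xt_chain hpX n y hy
  · intro n y hy hz
    cases n with
    | zero =>
      simp only [tShift_succ] at hz
      rw [h0] at hz; simp [pdsZero] at hz
    | succ n =>
      simp only [tShift_succ] at hy hz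
      exact xt_stop hpX hy hz

lemma tShift_bShift {p : ℕ → X ⊕ Unit} (hp : p ∈ Xtilde α Δ) {y : X}
    (h1 : p 1 = Sum.inl y) : tShift α (bShift p) = p := by
  funext n
  cases n with
  | zero =>
    obtain ⟨hyΔ, h0⟩ := xt_chain hp 0 y h1
    show Sum.map α id (p 1) = p 0
    rw [h1, h0]; rfl
  | succ n => rfl

lemma bShift_mem_Xtilde {p : ℕ → X ⊕ Unit} (hp : p ∈ Xtilde α Δ) {y : X}
    (h1 : p 1 = Sum.inl y) : bShift p ∈ Xtilde α Δ := by
  apply mem_Xtilde_of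
  · exact ⟨y, h1⟩
  · intro n x hx
    exact xt_chain hp (n + 1) x hx
  · intro n x hx hz
    exact xt_stop hp hx hz

end Aux

section Aux2

variable {α : X → X} {Δ : Set X}

lemma iter_coord_ge (p : ℕ → X ⊕ Unit) (n k : ℕ) :
    (tShift α)^[n] p (n + k) = p k := by
  induction n generalizing p with
  | zero => simp
  | succ n ih =>
    rw [Function.iterate_succ_apply']
    have : n + 1 + k = (n + k) + 1 := by omega
    rw [this, tShift_succ]
    exact ih p

lemma iter_coord_le {p : ℕ → X ⊕ Unit} {x : X} (h0 : p 0 = Sum.inl x)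
    {n k : ℕ} (hk : k ≤ n) :
    (tShift α)^[n] p k = Sum.inl (α^[n - k] x) := by
  induction n generalizing k with
  | zero =>
    obtain rfl : k = 0 := by omega
    simpa using h0
  | succ n ih =>
    rw [Function.iterate_succ_apply']
    cases k with
    | zero =>
      rw [tShift_zero, ih (Nat.zero_le n)]
      simp [Function.iterate_succ_apply']
    | succ k =>
      rw [tShift_succ, ih (by omega)]
      have e : n + 1 - (k + 1) = n - k := by omega
      rw [e]

lemma bShift_iter_coord (p : ℕ → X ⊕ Unit) (n k : ℕ) :
    bShift^[n] p k = p (n + k) := by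
  induction n generalizing p k with
  | zero => simp
  | succ n ih =>
    rw [Function.iterate_succ_apply]
    rw [ih]
    show p (n + k + 1) = p (n + 1 + k)
    congr 1
    omega

lemma bShift_iter_tShift_iter (p : ℕ → X ⊕ Unit) (n : ℕ) :
    bShift^[n] ((tShift α)^[n] p) = p := by
  funext k
  rw [bShift_iter_coord, iter_coord_ge]

lemma bShift_iter_mem_Xtilde {p : ℕ → X ⊕ Unit} (hp : p ∈ Xtilde α Δ) {n : ℕ} {y : X}
    (h : p n = Sum.inl y) : bShift^[n] p ∈ Xtilde α Δ := by
  induction n generalizing p y with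
  | zero => simpa using hp
  | succ n ih =>
    have h1 : p 1 = Sum.inl (α^[n] y) := by
      apply xt_coord_chain hp
      rw [show 1 + n = n + 1 by omega]
      exact h
    have hb : bShift p ∈ Xtilde α Δ := bShift_mem_Xtilde hp h1
    rw [Function.iterate_succ_apply]
    exact ih hb (show bShift p n = Sum.inl y from h)

lemma tShift_iter_bShift_iter {p : ℕ → X ⊕ Unit} (hp : p ∈ Xtilde α Δ) {n : ℕ} {y : X}
    (h : p n = Sum.inl y) : (tShift α)^[n] (bShift^[n] p) = p := by
  funext k
  rcases Nat.lt_or_ge k n with hk | hk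
  · have h0 : bShift^[n] p 0 = Sum.inl y := by rw [bShift_iter_coord]; simpa using h
    rw [iter_coord_le h0 (le_of_lt hk)]
    have : p k = Sum.inl (α^[n - k] y) := by
      apply xt_coord_chain hp
      rw [show k + (n - k) = n by omega]
      exact h
    rw [this]
  · obtain ⟨j, rfl⟩ := Nat.exists_eq_add_of_le hk
    rw [iter_coord_ge, bShift_iter_coord]

/-- membership in the iterated domain of the extension -/
lemma mem_tDom_succ_iff {p : ℕ → X ⊕ Unit} {n : ℕ} :
    p ∈ pdsDom (tShift α) (tDelta1 α Δ) (n + 1) ↔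
      p ∈ Xtilde α Δ ∧ ∃ x, p 0 = Sum.inl x ∧ x ∈ pdsDom α Δ (n + 1) := by
  induction n generalizing p with
  | zero =>
    show p ∈ tDelta1 α Δ ∩ _ ↔ _
    simp only [pdsDom, Set.preimage_univ, Set.inter_univ]
    constructor
    · rintro ⟨hX, x, hxΔ, h0⟩
      exact ⟨hX, x, h0, hxΔ⟩
    · rintro ⟨hX, x, h0, hxΔ⟩
      exact ⟨hX, x, hxΔ, h0⟩
  | succ n ih =>
    show p ∈ tDelta1 α Δ ∩ tShift α ⁻¹' pdsDom (tShift α) (tDelta1 α Δ) (n+1) ↔ _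
    constructor
    · rintro ⟨⟨hX, x, hxΔ, h0⟩, hpre⟩
      rcases (ih).1 hpre with ⟨-, y, hy0, hyd⟩
      have : y = α x := by
        rw [tShift_zero, h0] at hy0
        simpa using hy0.symm
      subst this
      exact ⟨hX, x, h0, ⟨hxΔ, hyd⟩⟩
    · rintro ⟨hX, x, h0, hxΔ, hxd⟩
      have hp1 : p ∈ tDelta1 α Δ := ⟨hX, x, hxΔ, h0⟩
      refine ⟨hp1, (ih).2 ⟨tShift_mem_Xtilde hp1, α x, ?_, hxd⟩⟩
      rw [tShift_zero, h0]; rfl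

lemma iter_mem_Xtilde {p : ℕ → X ⊕ Unit} (hp : p ∈ Xtilde α Δ) {n : ℕ}
    (hd : p ∈ pdsDom (tShift α) (tDelta1 α Δ) n) : (tShift α)^[n] p ∈ Xtilde α Δ := by
  induction n generalizing p with
  | zero => simpa using hp
  | succ n ih =>
    obtain ⟨h1, h2⟩ := hd
    rw [Function.iterate_succ_apply]
    exact ih (tShift_mem_Xtilde h1) h2

section Inv

variable {U' : Set (ℕ → X ⊕ Unit)}

lemma inv_fwd_iter (hU : PdsInvariant (tShift α) (tDelta1 α Δ) U')
    {q : ℕ → X ⊕ Unit} (hq : q ∈ U') {n : ℕ}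
    (hd : q ∈ pdsDom (tShift α) (tDelta1 α Δ) n) : (tShift α)^[n] q ∈ U' := by
  have : (tShift α)^[n] q ∈ (tShift α)^[n] '' (U' ∩ pdsDom (tShift α) (tDelta1 α Δ) n) :=
    ⟨q, ⟨hq, hd⟩, rfl⟩
  rw [hU n] at this
  exact this.1

lemma inv_bwd_iter (hU : PdsInvariant (tShift α) (tDelta1 α Δ) U')
    (hsub : U' ⊆ Xtilde α Δ) {q : ℕ → X ⊕ Unit} (hq : q ∈ U') {n : ℕ} {y : X}
    (h : q n = Sum.inl y) : bShift^[n] q ∈ U' := by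
  cases n with
  | zero => simpa using hq
  | succ n =>
    have hqX : q ∈ Xtilde α Δ := hsub hq
    have hbX : bShift^[n+1] q ∈ Xtilde α Δ := bShift_iter_mem_Xtilde hqX h
    have hb0 : bShift^[n+1] q 0 = Sum.inl y := by rw [bShift_iter_coord]; simpa using h
    have hbd : bShift^[n+1] q ∈ pdsDom (tShift α) (tDelta1 α Δ) (n+1) :=
      mem_tDom_succ_iff.2 ⟨hbX, y, hb0, xt_coord_dom hqX h⟩
    have hqmem : q ∈ U' ∩ (tShift α)^[n+1] '' pdsDom (tShift α) (tDelta1 α Δ) (n+1) :=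
      ⟨hq, ⟨bShift^[n+1] q, hbd, tShift_iter_bShift_iter hqX h⟩⟩
    rw [← hU (n+1)] at hqmem
    obtain ⟨p₁, ⟨hp₁U, -⟩, heq⟩ := hqmem
    rw [← heq, bShift_iter_tShift_iter]
    exact hp₁U

end Inv

end Aux2

set_option linter.unusedSectionVars false

section Top

variable [TopologicalSpace X] [CompactSpace X] [T2Space X]
variable {α : X → X} {Δ : Set X}

lemma isClosed_pdsDom (hΔ : IsClopen Δ) (hα : ContinuousOn α Δ) (n : ℕ) :
    IsClosed (pdsDom α Δ n) := by
  induction n with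
  | zero => exact isClosed_univ
  | succ n ih =>
    exact hα.preimage_isClosed_of_isClosed hΔ.isClosed ih

lemma isCompact_pdsDom (hΔ : IsClopen Δ) (hα : ContinuousOn α Δ) (n : ℕ) :
    IsCompact (pdsDom α Δ n) := (isClosed_pdsDom hΔ hα n).isCompact

lemma continuousOn_iter (hα : ContinuousOn α Δ) (n : ℕ) :
    ContinuousOn (α^[n]) (pdsDom α Δ n) := by
  induction n with
  | zero => simpa using continuousOn_id
  | succ n ih =>
    rw [Function.iterate_succ]
    apply ContinuousOn.comp ih (hα.mono (by exact fun x hx => hx.1))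
    intro x hx
    exact hx.2

lemma isCompact_Dneg (hΔ : IsClopen Δ) (hα : ContinuousOn α Δ) (n : ℕ) :
    IsCompact (α^[n] '' pdsDom α Δ n) :=
  (isCompact_pdsDom hΔ hα n).image_of_continuousOn (continuousOn_iter hα n)

lemma Dneg_antitone {m n : ℕ} (h : m ≤ n) :
    α^[n] '' pdsDom α Δ n ⊆ α^[m] '' pdsDom α Δ m := by
  rintro y ⟨u, hu, rfl⟩
  obtain ⟨c, rfl⟩ := Nat.exists_eq_add_of_le h
  rw [show m + c = c + m by omega] at hu
  rcases (mem_pdsDom_add c m u).1 hu with ⟨h1, h2⟩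
  exact ⟨α^[c] u, h2, (Function.iterate_add_apply α m c u).symm⟩

lemma isClosed_Xtilde (hΔ : IsClopen Δ) (hα : ContinuousOn α Δ)
    (hopen : IsOpen (α '' Δ)) : IsClosed (Xtilde α Δ) := by
  have hA : IsClosed {p : ℕ → X ⊕ Unit | ∃ x, p 0 = Sum.inl x} := by
    have : {p : ℕ → X ⊕ Unit | ∃ x, p 0 = Sum.inl x}
        = (fun p : ℕ → X ⊕ Unit => p 0) ⁻¹' (Set.range Sum.inl) := by
      ext p
      simp [Set.range, eq_comm]
    rw [this]
    exact isClosed_range_inl.preimage (continuous_apply 0)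
  have hB : ∀ n : ℕ, IsClosed {p : ℕ → X ⊕ Unit |
      ∀ x, p (n + 1) = Sum.inl x → x ∈ Δ ∧ p n = Sum.inl (α x)} := by
    intro n
    have hS : IsClosed ((Prod.snd ⁻¹' (Set.range (Sum.inr : Unit → X ⊕ Unit))) ∪
        ((fun x => ((Sum.inl (α x) : X ⊕ Unit), (Sum.inl x : X ⊕ Unit))) '' Δ)) := by
      apply IsClosed.union
      · exact isClosed_range_inr.preimage continuous_snd
      · apply IsCompact.isClosed
        apply hΔ.isClosed.isCompact.image_of_continuousOn
        exact (continuous_inl.comp_continuousOn hα).prodMk continuous_inl.continuousOn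
    have heq : {p : ℕ → X ⊕ Unit | ∀ x, p (n + 1) = Sum.inl x → x ∈ Δ ∧ p n = Sum.inl (α x)}
        = (fun p : ℕ → X ⊕ Unit => (p n, p (n + 1))) ⁻¹'
          ((Prod.snd ⁻¹' (Set.range (Sum.inr : Unit → X ⊕ Unit))) ∪
            ((fun x => ((Sum.inl (α x) : X ⊕ Unit), (Sum.inl x : X ⊕ Unit))) '' Δ)) := by
      ext p
      simp only [Set.mem_setOf_eq, Set.mem_preimage, Set.mem_union, Set.mem_image,
        Set.mem_range, Prod.mk.injEq]
      constructor
      · intro h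
        rcases sum_cases (p (n+1)) with ⟨x, hx⟩ | hz
        · obtain ⟨h1, h2⟩ := h x hx
          exact Or.inr ⟨x, h1, h2.symm, hx.symm⟩
        · exact Or.inl ⟨(), hz.symm⟩
      · rintro (⟨u, hu⟩ | ⟨w, hwΔ, h1, h2⟩) x hx
        · rw [← hu] at hx; simp at hx
        · rw [← h2] at hx
          obtain rfl : w = x := by simpa using hx
          exact ⟨hwΔ, h1.symm⟩
    rw [heq]
    exact hS.preimage ((continuous_apply n).prodMk (continuous_apply (n+1)))
  have hC : ∀ n : ℕ, IsClosed {p : ℕ → X ⊕ Unit |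
      ∀ x, p n = Sum.inl x → p (n + 1) = pdsZero X → x ∉ α '' Δ} := by
    intro n
    have hS : IsClosed ((((Sum.inl '' (α '' Δ) : Set (X ⊕ Unit))) ×ˢ
        ({pdsZero X} : Set (X ⊕ Unit)))ᶜ) := by
      apply IsOpen.isClosed_compl
      apply IsOpen.prod
      · exact isOpenMap_inl _ hopen
      · have : ({pdsZero X} : Set (X ⊕ Unit)) = Set.range (Sum.inr : Unit → X ⊕ Unit) := by
          ext a
          simp only [Set.mem_singleton_iff, Set.mem_range]
          constructor
          · rintro rfl; exact ⟨(), rfl⟩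
          · rintro ⟨u, rfl⟩; rfl
        rw [this]
        exact isOpen_range_inr
    have heq : {p : ℕ → X ⊕ Unit | ∀ x, p n = Sum.inl x → p (n + 1) = pdsZero X → x ∉ α '' Δ}
        = (fun p : ℕ → X ⊕ Unit => (p n, p (n + 1))) ⁻¹'
          ((((Sum.inl '' (α '' Δ) : Set (X ⊕ Unit))) ×ˢ ({pdsZero X} : Set (X ⊕ Unit)))ᶜ) := by
      ext p
      simp only [Set.mem_setOf_eq, Set.mem_preimage, Set.mem_compl_iff, Set.mem_prod,
        Set.mem_singleton_iff, Set.mem_image, not_and]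
      constructor
      · rintro h ⟨x, hxim, hx⟩ hz
        exact h x hx.symm hz hxim
      · intro h x hx hz hxim
        exact h ⟨x, hxim, hx.symm⟩ hz
    rw [heq]
    exact hS.preimage ((continuous_apply n).prodMk (continuous_apply (n+1)))
  have hXeq : Xtilde α Δ = {p : ℕ → X ⊕ Unit | ∃ x, p 0 = Sum.inl x} ∩
      ((⋂ n, {p : ℕ → X ⊕ Unit | ∀ x, p (n + 1) = Sum.inl x → x ∈ Δ ∧ p n = Sum.inl (α x)}) ∩
       (⋂ n, {p : ℕ → X ⊕ Unit |
          ∀ x, p n = Sum.inl x → p (n + 1) = pdsZero X → x ∉ α '' Δ})) := by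
    ext p
    constructor
    · intro hp
      refine ⟨xt_nonzero0 hp, Set.mem_iInter.2 fun n => fun x hx => xt_chain hp n x hx,
        Set.mem_iInter.2 fun n x h1 h2 => xt_stop hp h1 h2⟩
    · rintro ⟨h0, hc, hs⟩
      exact mem_Xtilde_of h0 (fun n x hx => Set.mem_iInter.1 hc n x hx)
        (fun n x h1 h2 => Set.mem_iInter.1 hs n x h1 h2)
  rw [hXeq]
  exact hA.inter ((isClosed_iInter hB).inter (isClosed_iInter hC))

end Top

section Constr

variable {α : X → X} {Δ : Set X}

lemma exists_mem_Xtilde (α : X → X) (Δ : Set X) (x : X) :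
    ∃ p ∈ Xtilde α Δ, p 0 = Sum.inl x := by
  classical
  let g : X ⊕ Unit → X ⊕ Unit :=
    Sum.elim (fun y => if h : y ∈ α '' Δ then Sum.inl h.choose else pdsZero X)
      (fun _ => pdsZero X)
  refine ⟨fun n => g^[n] (Sum.inl x), ?_, by simp⟩
  have hstep : ∀ n, g^[n+1] (Sum.inl x) = g (g^[n] (Sum.inl x)) := fun n =>
    Function.iterate_succ_apply' g n (Sum.inl x)
  apply mem_Xtilde_of
  · exact ⟨x, by simp⟩
  · intro n w hw
    rw [hstep] at hw
    rcases sum_cases (g^[n] (Sum.inl x)) with ⟨y, hy⟩ | hz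
    · rw [hy] at hw
      simp only [g, Sum.elim_inl] at hw
      by_cases h : y ∈ α '' Δ
      · rw [dif_pos h] at hw
        obtain rfl : h.choose = w := by simpa using hw
        obtain ⟨h1, h2⟩ := h.choose_spec
        exact ⟨h1, by rw [hy, h2]⟩
      · rw [dif_neg h] at hw
        simp [pdsZero] at hw
    · rw [hz] at hw
      simp [g, pdsZero] at hw
  · intro n w hw hz
    rw [hstep, hw] at hz
    simp only [g, Sum.elim_inl] at hz
    by_cases h : w ∈ α '' Δ
    · rw [dif_pos h] at hz
      simp [pdsZero] at hz
    · exact h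

lemma exists_mem_Xtilde_inv {V : Set X}
    (hV : ∀ y ∈ V, y ∈ α '' Δ → ∃ w, w ∈ V ∧ w ∈ Δ ∧ α w = y)
    {x : X} (hx : x ∈ V) :
    ∃ p ∈ Xtilde α Δ, p 0 = Sum.inl x ∧ ∀ n y, p n = Sum.inl y → y ∈ V := by
  classical
  let g : X ⊕ Unit → X ⊕ Unit :=
    Sum.elim (fun y => if h : y ∈ V ∧ y ∈ α '' Δ
      then Sum.inl (hV y h.1 h.2).choose else pdsZero X)
      (fun _ => pdsZero X)
  have hstep : ∀ n, g^[n+1] (Sum.inl x) = g (g^[n] (Sum.inl x)) := fun n =>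
    Function.iterate_succ_apply' g n (Sum.inl x)
  have hinv : ∀ n y, g^[n] (Sum.inl x) = Sum.inl y → y ∈ V := by
    intro n
    induction n with
    | zero =>
      intro y hy
      obtain rfl : x = y := by simpa using hy
      exact hx
    | succ n ih =>
      intro y hy
      rw [hstep] at hy
      rcases sum_cases (g^[n] (Sum.inl x)) with ⟨z, hz⟩ | hz
      · rw [hz] at hy
        simp only [g, Sum.elim_inl] at hy
        by_cases h : z ∈ V ∧ z ∈ α '' Δ
        · rw [dif_pos h] at hy
          obtain rfl : (hV z h.1 h.2).choose = y := by simpa using hy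
          exact (hV z h.1 h.2).choose_spec.1
        · rw [dif_neg h] at hy
          simp [pdsZero] at hy
      · rw [hz] at hy
        simp [g, pdsZero] at hy
  refine ⟨fun n => g^[n] (Sum.inl x), ?_, by simp, hinv⟩
  apply mem_Xtilde_of
  · exact ⟨x, by simp⟩
  · intro n w hw
    rw [hstep] at hw
    rcases sum_cases (g^[n] (Sum.inl x)) with ⟨y, hy⟩ | hz
    · rw [hy] at hw
      simp only [g, Sum.elim_inl] at hw
      by_cases h : y ∈ V ∧ y ∈ α '' Δ
      · rw [dif_pos h] at hw
        obtain rfl : (hV y h.1 h.2).choose = w := by simpa using hw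
        obtain ⟨h1, h2, h3⟩ := (hV y h.1 h.2).choose_spec
        exact ⟨h2, by rw [hy, h3]⟩
      · rw [dif_neg h] at hw
        simp [pdsZero] at hw
    · rw [hz] at hw
      simp [g, pdsZero] at hw
  · intro n w hw hz
    rw [hstep, hw] at hz
    simp only [g, Sum.elim_inl] at hz
    by_cases h : w ∈ V ∧ w ∈ α '' Δ
    · rw [dif_pos h] at hz
      simp [pdsZero] at hz
    · intro him
      exact h ⟨hinv n w hw, him⟩

end Constr

section DirRL

variable [TopologicalSpace X] [CompactSpace X] [T2Space X]
variable {α : X → X} {Δ : Set X}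

lemma dir_rl (hΔ : IsClopen Δ) (hα : ContinuousOn α Δ) (hopen : IsOpen (α '' Δ))
    (hR : ∀ U' : Set (ℕ → X ⊕ Unit), U' ⊆ Xtilde α Δ →
      IsClosed (Subtype.val ⁻¹' U' : Set ↥(Xtilde α Δ)) →
      PdsInvariant (tShift α) (tDelta1 α Δ) U' →
      U' = ∅ ∨ U' = Xtilde α Δ) :
    ∀ V : Set X, IsClosed V → PdsInvariant α Δ V → V = ∅ ∨ V = Set.univ := by
  intro V hVc hVinv
  set Vt : Set (ℕ → X ⊕ Unit) :=
    Xtilde α Δ ∩ {p | ∀ n x, p n = Sum.inl x → x ∈ V} with hVtdef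
  have hVfwd : ∀ (j : ℕ) (x : X), x ∈ V → x ∈ pdsDom α Δ j → α^[j] x ∈ V := by
    intro j x h1 h2
    have : α^[j] x ∈ α^[j] '' (V ∩ pdsDom α Δ j) := ⟨x, ⟨h1, h2⟩, rfl⟩
    rw [hVinv j] at this
    exact this.1
  have hsub : Vt ⊆ Xtilde α Δ := Set.inter_subset_left
  have hclosed : IsClosed (Subtype.val ⁻¹' Vt : Set ↥(Xtilde α Δ)) := by
    have heq : (Subtype.val ⁻¹' Vt : Set ↥(Xtilde α Δ)) =
        ⋂ n, (fun q : ↥(Xtilde α Δ) => (q : ℕ → X ⊕ Unit) n) ⁻¹'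
          (Sum.inl '' V ∪ Set.range (Sum.inr : Unit → X ⊕ Unit)) := by
      ext ⟨p, hp⟩
      simp only [Set.mem_preimage, Set.mem_iInter, Set.mem_union, Set.mem_image,
        Set.mem_range, hVtdef, Set.mem_inter_iff, Set.mem_setOf_eq]
      constructor
      · rintro ⟨-, h⟩ n
        rcases sum_cases (p n) with ⟨x, hx⟩ | hz
        · exact Or.inl ⟨x, h n x hx, hx.symm⟩
        · exact Or.inr ⟨(), hz.symm⟩
      · intro h
        refine ⟨hp, fun n x hx => ?_⟩
        rcases h n with ⟨y, hyV, hy⟩ | ⟨u, hu⟩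
        · rw [← hy] at hx
          obtain rfl : y = x := by simpa using hx
          exact hyV
        · rw [← hu] at hx; simp at hx
    rw [heq]
    refine isClosed_iInter fun n => IsClosed.preimage
      ((continuous_apply n).comp continuous_subtype_val) ?_
    exact (Topology.IsClosedEmbedding.inl.isClosedMap V hVc).union isClosed_range_inr
  have hinv : PdsInvariant (tShift α) (tDelta1 α Δ) Vt := by
    intro n
    cases n with
    | zero => simp [pdsDom]
    | succ n =>
      ext q
      constructor
      · rintro ⟨p, ⟨⟨hpX, hpV⟩, hpd⟩, rfl⟩
        obtain ⟨-, x, hp0, hxd⟩ := mem_tDom_succ_iff.1 hpd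
        refine ⟨⟨iter_mem_Xtilde hpX hpd, ?_⟩, ⟨p, hpd, rfl⟩⟩
        intro m w hw
        rcases Nat.lt_or_ge m (n + 1) with hm | hm
        · rw [iter_coord_le hp0 (by omega)] at hw
          obtain rfl : α^[n + 1 - m] x = w := by simpa using hw
          exact hVfwd _ x (hpV 0 x hp0) (pdsDom_anti (by omega) hxd)
        · obtain ⟨j, rfl⟩ := Nat.exists_eq_add_of_le hm
          rw [iter_coord_ge] at hw
          exact hpV j w hw
      · rintro ⟨⟨hqX, hqV⟩, ⟨p, hpd, rfl⟩⟩
        refine ⟨p, ⟨⟨(mem_tDom_succ_iff.1 hpd).1, ?_⟩, hpd⟩, rfl⟩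
        intro m w hw
        apply hqV (n + 1 + m) w
        rw [iter_coord_ge]
        exact hw
  rcases hR Vt hsub hclosed hinv with h | h
  · left
    rw [Set.eq_empty_iff_forall_notMem]
    intro x hx
    have hV1 : ∀ y ∈ V, y ∈ α '' Δ → ∃ w, w ∈ V ∧ w ∈ Δ ∧ α w = y := by
      intro y hyV ⟨w, hwΔ, hwy⟩
      have hmem : y ∈ V ∩ α^[1] '' pdsDom α Δ 1 := by
        refine ⟨hyV, ⟨w, ⟨hwΔ, trivial⟩, by simpa using hwy⟩⟩
      rw [← hVinv 1] at hmem
      obtain ⟨w', ⟨hw'V, hw'd⟩, hw'y⟩ := hmem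
      exact ⟨w', hw'V, hw'd.1, by simpa using hw'y⟩
    obtain ⟨p, hpX, hp0, hpV⟩ := exists_mem_Xtilde_inv hV1 hx
    have : p ∈ Vt := ⟨hpX, fun n y hy => hpV n y hy⟩
    rw [h] at this
    exact this
  · right
    rw [Set.eq_univ_iff_forall]
    intro x
    obtain ⟨p, hpX, hp0⟩ := exists_mem_Xtilde α Δ x
    have hpV : p ∈ Vt := by rw [h]; exact hpX
    exact hpV.2 0 x hp0

end DirRL

section Key

variable [TopologicalSpace X] [CompactSpace X] [T2Space X]
variable {α : X → X} {Δ : Set X}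

lemma mem_tDom_of {q : ℕ → X ⊕ Unit} {x : X} {n : ℕ} (hqX : q ∈ Xtilde α Δ)
    (hq0 : q 0 = Sum.inl x) (hxd : x ∈ pdsDom α Δ n) :
    q ∈ pdsDom (tShift α) (tDelta1 α Δ) n := by
  cases n with
  | zero => trivial
  | succ n => exact mem_tDom_succ_iff.2 ⟨hqX, x, hq0, hxd⟩

lemma eq_Xtilde_of_key {U' : Set (ℕ → X ⊕ Unit)} (hsub : U' ⊆ Xtilde α Δ)
    (hclosed : IsClosed (Subtype.val ⁻¹' U' : Set ↥(Xtilde α Δ)))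
    (hU : PdsInvariant (tShift α) (tDelta1 α Δ) U')
    (hKey : ∀ x : X, ∃ q ∈ U', q 0 = Sum.inl x) :
    U' = Xtilde α Δ := by
  classical
  apply Set.Subset.antisymm hsub
  intro p hp
  by_cases hfin : ∃ n, p n = pdsZero X
  · set k := Nat.find hfin with hkdef
    have hkz : p k = pdsZero X := Nat.find_spec hfin
    have hk1 : 1 ≤ k := by
      rcases xt_nonzero0 hp with ⟨x, hx⟩
      rcases Nat.eq_zero_or_pos k with h | h
      · rw [h] at hkz; rw [hkz] at hx; simp [pdsZero] at hx
      · exact h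
    obtain ⟨r, hr⟩ : ∃ r, p (k - 1) = Sum.inl r := by
      rcases sum_cases (p (k - 1)) with h | h
      · exact h
      · exact absurd h (Nat.find_min hfin (by omega))
    have hrn : r ∉ α '' Δ :=
      xt_stop hp hr (by rw [show k - 1 + 1 = k by omega]; exact hkz)
    have hrd : r ∈ pdsDom α Δ (k - 1) := xt_coord_dom hp hr
    obtain ⟨q, hqU, hq0⟩ := hKey r
    have hqX := hsub hqU
    have hq1 : ∀ j, 1 ≤ j → q j = pdsZero X := by
      have h1 : q 1 = pdsZero X := by
        rcases sum_cases (q 1) with ⟨w, hw⟩ | h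
        · obtain ⟨hwΔ, h0⟩ := xt_chain hqX 0 w hw
          rw [hq0] at h0
          obtain rfl : r = α w := by simpa using h0
          exact absurd ⟨w, hwΔ, rfl⟩ hrn
        · exact h
      intro j hj
      exact xt_zero_stable hqX h1 j hj
    have hfwd : (tShift α)^[k - 1] q ∈ U' :=
      inv_fwd_iter hU hqU (mem_tDom_of hqX hq0 hrd)
    have heq : (tShift α)^[k - 1] q = p := by
      funext m
      rcases le_or_gt m (k - 1) with hm | hm
      · rw [iter_coord_le hq0 hm]
        exact (xt_coord_chain hp
          (by rw [show m + (k - 1 - m) = k - 1 by omega]; exact hr)).symm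
      · obtain ⟨j, hj⟩ : ∃ j, m = (k - 1) + (j + 1) := ⟨m - k, by omega⟩
        subst hj
        rw [iter_coord_ge, hq1 (j + 1) (by omega)]
        exact (xt_zero_stable hp hkz _ (by omega)).symm
    rw [← heq]
    exact hfwd
  · push_neg at hfin
    have hcoord : ∀ n, ∃ x, p n = Sum.inl x := fun n => by
      rcases sum_cases (p n) with h | h
      · exact h
      · exact absurd h (hfin n)
    have hmem : (⟨p, hp⟩ : ↥(Xtilde α Δ)) ∈ closure (Subtype.val ⁻¹' U') := by
      rw [mem_closure_iff]
      intro O hO hpO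
      obtain ⟨O', hO', rfl⟩ := isOpen_induced_iff.1 hO
      obtain ⟨I, u, hu, hIsub⟩ := isOpen_pi_iff.1 hO' p hpO
      set n := I.sup id with hn
      obtain ⟨x, hx⟩ := hcoord n
      obtain ⟨q, hqU, hq0⟩ := hKey x
      have hqX := hsub hqU
      have hxd : x ∈ pdsDom α Δ n := xt_coord_dom hp hx
      have hq' : (tShift α)^[n] q ∈ U' :=
        inv_fwd_iter hU hqU (mem_tDom_of hqX hq0 hxd)
      have hcoords : ∀ i ∈ I, (tShift α)^[n] q i = p i := by
        intro i hi
        have hin : i ≤ n := Finset.le_sup (f := id) hi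
        rw [iter_coord_le hq0 hin]
        exact (xt_coord_chain hp
          (by rw [show i + (n - i) = n by omega]; exact hx)).symm
      refine ⟨⟨(tShift α)^[n] q, hsub hq'⟩, ?_, hq'⟩
      show (tShift α)^[n] q ∈ O'
      apply hIsub
      intro i hi
      rw [hcoords i hi]
      exact (hu i hi).2
    exact hclosed.closure_subset hmem
end Key

section DirLR

variable [TopologicalSpace X] [CompactSpace X] [T2Space X]
variable {α : X → X} {Δ : Set X}

lemma Z_invariant (hΔ : IsClopen Δ) (hα : ContinuousOn α Δ) :
    PdsInvariant α Δ (⋂ m, α^[m] '' pdsDom α Δ m) := by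
  intro n
  set Z := ⋂ m, α^[m] '' pdsDom α Δ m with hZ
  ext y
  constructor
  · rintro ⟨x, ⟨hxZ, hxd⟩, rfl⟩
    refine ⟨Set.mem_iInter.2 fun j => ?_, ⟨x, hxd, rfl⟩⟩
    obtain ⟨u, hu, hux⟩ := Set.mem_iInter.1 hxZ j
    have hu2 : u ∈ pdsDom α Δ (j + n) :=
      (mem_pdsDom_add j n u).2 ⟨hu, by rw [hux]; exact hxd⟩
    have hmem : α^[n] x ∈ α^[j + n] '' pdsDom α Δ (j + n) := by
      refine ⟨u, hu2, ?_⟩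
      rw [show j + n = n + j by omega, Function.iterate_add_apply, hux]
    exact Dneg_antitone (by omega) hmem
  · rintro ⟨hyZ, hyD⟩
    set K : ℕ → Set X := fun m =>
      {x | x ∈ pdsDom α Δ n ∧ x ∈ α^[m] '' pdsDom α Δ m ∧ α^[n] x = y} with hK
    have hKc : ∀ m, IsClosed (K m) := by
      intro m
      have h1 : IsClosed (pdsDom α Δ n ∩ α^[n] ⁻¹' {y}) :=
        (continuousOn_iter hα n).preimage_isClosed_of_isClosed
          (isClosed_pdsDom hΔ hα n) isClosed_singleton
      have h2 : IsClosed (α^[m] '' pdsDom α Δ m) := (isCompact_Dneg hΔ hα m).isClosed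
      have heq : K m = (pdsDom α Δ n ∩ α^[n] ⁻¹' {y}) ∩ (α^[m] '' pdsDom α Δ m) := by
        ext x
        constructor
        · rintro ⟨a, b, c⟩; exact ⟨⟨a, c⟩, b⟩
        · rintro ⟨⟨a, c⟩, b⟩; exact ⟨a, b, c⟩
      rw [heq]; exact h1.inter h2
    have hKanti : ∀ m, K (m + 1) ⊆ K m := fun m x hx =>
      ⟨hx.1, Dneg_antitone (by omega) hx.2.1, hx.2.2⟩
    have hKne : ∀ m, (K m).Nonempty := by
      intro m
      obtain ⟨u, hu, huy⟩ := Set.mem_iInter.1 hyZ (n + m)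
      have hu' : u ∈ pdsDom α Δ (m + n) := by
        rw [show m + n = n + m by omega]; exact hu
      obtain ⟨h1, h2⟩ := (mem_pdsDom_add m n u).1 hu'
      refine ⟨α^[m] u, h2, ⟨u, h1, rfl⟩, ?_⟩
      rw [← Function.iterate_add_apply α n m u]
      exact huy
    have hK0c : IsCompact (K 0) :=
      IsCompact.of_isClosed_subset (isCompact_pdsDom hΔ hα n) (hKc 0) (fun x hx => hx.1)
    obtain ⟨x, hx⟩ := IsCompact.nonempty_iInter_of_sequence_nonempty_isCompact_isClosed
      K hKanti hKne hK0c hKc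
    have hx' := fun m => Set.mem_iInter.1 hx m
    exact ⟨x, ⟨Set.mem_iInter.2 fun m => (hx' m).2.1, (hx' 0).1⟩, (hx' 0).2.2⟩

lemma dir_lr (hΔ : IsClopen Δ) (hα : ContinuousOn α Δ) (hopen : IsOpen (α '' Δ))
    (hmin : ∀ V : Set X, IsClosed V → PdsInvariant α Δ V → V = ∅ ∨ V = Set.univ) :
    ∀ U' : Set (ℕ → X ⊕ Unit), U' ⊆ Xtilde α Δ →
      IsClosed (Subtype.val ⁻¹' U' : Set ↥(Xtilde α Δ)) →
      PdsInvariant (tShift α) (tDelta1 α Δ) U' →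
      U' = ∅ ∨ U' = Xtilde α Δ := by
  classical
  intro U' hsub hclosed hU
  rcases Set.eq_empty_or_nonempty U' with h | ⟨q₀, hq₀⟩
  · exact Or.inl h
  right
  apply eq_Xtilde_of_key hsub hclosed hU
  have hq₀X := hsub hq₀
  obtain ⟨x₀, hx₀⟩ := xt_nonzero0 hq₀X
  set Z := ⋂ m, α^[m] '' pdsDom α Δ m with hZdef
  have hZc : IsClosed Z := isClosed_iInter fun m => (isCompact_Dneg hΔ hα m).isClosed
  rcases hmin Z hZc (Z_invariant hΔ hα) with hZe | hZu
  · -- finite depth case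
    obtain ⟨n₀, hn₀⟩ : ∃ n₀, α^[n₀] '' pdsDom α Δ n₀ = ∅ := by
      by_contra hcon
      push_neg at hcon
      have hne := IsCompact.nonempty_iInter_of_sequence_nonempty_isCompact_isClosed
        (fun m => α^[m] '' pdsDom α Δ m) (fun m => Dneg_antitone (by omega))
        (fun m => hcon m) (isCompact_Dneg hΔ hα 0)
        (fun m => (isCompact_Dneg hΔ hα m).isClosed)
      rw [← hZdef, hZe] at hne
      exact Set.not_nonempty_empty hne
    have hdom₀ : pdsDom α Δ n₀ = ∅ := Set.image_eq_empty.1 hn₀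
    -- find a top point t
    have hex : ∃ m, x₀ ∉ pdsDom α Δ m := ⟨n₀, by rw [hdom₀]; exact Set.notMem_empty _⟩
    set k1 := Nat.find hex with hk1def
    have hk1n : x₀ ∉ pdsDom α Δ k1 := Nat.find_spec hex
    have hk1pos : 1 ≤ k1 := by
      rcases Nat.eq_zero_or_pos k1 with h | h
      · exfalso; rw [h] at hk1n; exact hk1n trivial
      · exact h
    have hkkP : x₀ ∈ pdsDom α Δ (k1 - 1) := by
      by_contra hc
      exact Nat.find_min hex (show k1 - 1 < k1 by omega) hc
    set t := α^[k1 - 1] x₀ with ht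
    have htΔ : t ∉ Δ := by
      intro htm
      apply hk1n
      have hmem := (mem_pdsDom_add (k1 - 1) 1 x₀).2 ⟨hkkP, ⟨htm, trivial⟩⟩
      rwa [show k1 - 1 + 1 = k1 by omega] at hmem
    -- d = maximal depth of t
    have hexd : ∃ m, t ∉ α^[m] '' pdsDom α Δ m :=
      ⟨n₀, by rw [hn₀]; exact Set.notMem_empty _⟩
    set d1 := Nat.find hexd with hd1def
    have hd1n : t ∉ α^[d1] '' pdsDom α Δ d1 := Nat.find_spec hexd
    have hd1pos : 1 ≤ d1 := by
      rcases Nat.eq_zero_or_pos d1 with h | h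
      · exfalso; rw [h] at hd1n; exact hd1n ⟨t, trivial, rfl⟩
      · exact h
    set d := d1 - 1 with hddef
    have hdP : t ∈ α^[d] '' pdsDom α Δ d := by
      by_contra hc
      exact Nat.find_min hexd (show d < d1 by omega) hc
    have hdmax : ∀ m, t ∈ α^[m] '' pdsDom α Δ m → m ≤ d := by
      intro m hm
      by_contra hc
      push_neg at hc
      exact hd1n (Dneg_antitone (by omega) hm)
    obtain ⟨z, hzd, hzt⟩ := hdP
    have hjdepth : ∀ j, j ≤ d → ∀ m, α^[j] z ∈ α^[m] '' pdsDom α Δ m → m ≤ j := by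
      intro j hj m hm
      obtain ⟨u, hu, hux⟩ := hm
      have hzj : α^[j] z ∈ pdsDom α Δ (d - j) := by
        have hz' : z ∈ pdsDom α Δ (j + (d - j)) := by
          rw [show j + (d - j) = d by omega]; exact hzd
        exact ((mem_pdsDom_add j (d - j) z).1 hz').2
      have hu2 : u ∈ pdsDom α Δ (m + (d - j)) :=
        (mem_pdsDom_add m (d - j) u).2 ⟨hu, by rw [hux]; exact hzj⟩
      have ht2 : t ∈ α^[m + (d - j)] '' pdsDom α Δ (m + (d - j)) := by
        refine ⟨u, hu2, ?_⟩
        rw [show m + (d - j) = (d - j) + m by omega, Function.iterate_add_apply, hux,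
          ← Function.iterate_add_apply, show (d - j) + j = d by omega]
        exact hzt
      have := hdmax _ ht2
      omega
    set V := (fun j => α^[j] z) '' {j | j ≤ d} with hVdef
    have hVc : IsClosed V := (Set.Finite.image _ (Set.finite_Iic d)).isClosed
    have hVinv : PdsInvariant α Δ V := by
      intro n
      ext y
      constructor
      · rintro ⟨x, ⟨⟨j, hj, rfl⟩, hxd⟩, rfl⟩
        have hj' : j ≤ d := hj
        have hjn : j + n ≤ d := by
          by_contra hc
          push_neg at hc
          have hzjn : z ∈ pdsDom α Δ (j + n) :=
            (mem_pdsDom_add j n z).2 ⟨pdsDom_anti hj' hzd, hxd⟩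
          have htd : t ∈ pdsDom α Δ (j + n - d) := by
            have hz2 : z ∈ pdsDom α Δ (d + (j + n - d)) := by
              rw [show d + (j + n - d) = j + n by omega]; exact hzjn
            have hdd := ((mem_pdsDom_add d (j + n - d) z).1 hz2).2
            rw [hzt] at hdd
            exact hdd
          exact htΔ (pdsDom_subset_delta (by omega) htd)
        exact ⟨⟨n + j, by simp only [Set.mem_setOf_eq]; omega,
          (Function.iterate_add_apply α n j z)⟩, ⟨α^[j] z, hxd, rfl⟩⟩
      · rintro ⟨⟨j, hj, rfl⟩, ⟨x, hxd, hxy⟩⟩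
        have hj' : j ≤ d := hj
        have hnj : n ≤ j := hjdepth j hj' n ⟨x, hxd, hxy⟩
        refine ⟨α^[j - n] z, ⟨⟨j - n, by simp only [Set.mem_setOf_eq]; omega, rfl⟩, ?_⟩, ?_⟩
        · have hz' : z ∈ pdsDom α Δ ((j - n) + n) := by
            rw [show (j - n) + n = j by omega]; exact pdsDom_anti hj' hzd
          exact ((mem_pdsDom_add (j - n) n z).1 hz').2
        · rw [← Function.iterate_add_apply, show n + (j - n) = j by omega]
    rcases hmin V hVc hVinv with hVe | hVu
    · exfalso
      have hzV : z ∈ V := ⟨0, by simp only [Set.mem_setOf_eq]; omega, by simp⟩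
      rw [hVe] at hzV
      exact hzV
    have hall : ∀ x : X, ∃ j, j ≤ d ∧ α^[j] z = x := by
      intro x
      have hxV : x ∈ V := by rw [hVu]; trivial
      obtain ⟨j, hj, hjx⟩ := hxV
      exact ⟨j, hj, hjx⟩
    have hroot_uniq : ∀ r : X, r ∉ α '' Δ → r = z := by
      intro r hr
      obtain ⟨j, hj, hjz⟩ := hall r
      cases j with
      | zero => simpa using hjz.symm
      | succ j =>
        exfalso
        apply hr
        refine ⟨α^[j] z, ?_, ?_⟩
        · have hz1 : z ∈ pdsDom α Δ (j + 1) := pdsDom_anti hj hzd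
          exact ((mem_pdsDom_add j 1 z).1 hz1).2.1
        · rw [← Function.iterate_succ_apply' α j z]
          exact hjz
    -- extract the root point of q₀
    have hq₀n₀ : q₀ n₀ = pdsZero X := by
      rcases sum_cases (q₀ n₀) with ⟨v, hv⟩ | h
      · exfalso
        have hvd := xt_coord_dom hq₀X hv
        rw [hdom₀] at hvd
        exact hvd
      · exact h
    have hfin : ∃ nn, q₀ nn = pdsZero X := ⟨n₀, hq₀n₀⟩
    set k := Nat.find hfin with hkdef
    have hkz : q₀ k = pdsZero X := Nat.find_spec hfin
    have hk1 : 1 ≤ k := by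
      rcases Nat.eq_zero_or_pos k with h | h
      · rw [h] at hkz; rw [hkz] at hx₀; simp [pdsZero] at hx₀
      · exact h
    obtain ⟨r, hr⟩ : ∃ r, q₀ (k - 1) = Sum.inl r := by
      rcases sum_cases (q₀ (k - 1)) with h | h
      · exact h
      · exact absurd h (Nat.find_min hfin (by omega))
    have hrn : r ∉ α '' Δ :=
      xt_stop hq₀X hr (by rw [show k - 1 + 1 = k by omega]; exact hkz)
    rw [hroot_uniq r hrn] at hr
    have hbz : bShift^[k - 1] q₀ ∈ U' := inv_bwd_iter hU hsub hq₀ hr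
    have hbz0 : bShift^[k - 1] q₀ 0 = Sum.inl z := by
      rw [bShift_iter_coord, Nat.add_zero]
      exact hr
    intro x
    obtain ⟨j, hj, hjx⟩ := hall x
    have hzj : z ∈ pdsDom α Δ j := pdsDom_anti hj hzd
    refine ⟨(tShift α)^[j] (bShift^[k - 1] q₀),
      inv_fwd_iter hU hbz (mem_tDom_of (hsub hbz) hbz0 hzj), ?_⟩
    rw [iter_coord_le hbz0 (Nat.zero_le j), Nat.sub_zero, hjx]
  · -- Z = univ case
    have hZall : ∀ x : X, x ∈ Z := fun x => by rw [hZu]; trivial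
    have hDneg : ∀ m (x : X), x ∈ α^[m] '' pdsDom α Δ m := fun m x =>
      Set.mem_iInter.1 (hZall x) m
    have hαΔ : ∀ x : X, x ∈ α '' Δ := by
      intro x
      obtain ⟨u, hu, hux⟩ := hDneg 1 x
      exact ⟨u, hu.1, by simpa using hux⟩
    set W := {x : X | ∃ q ∈ U', q 0 = Sum.inl x} with hWdef
    haveI : CompactSpace ↥(Xtilde α Δ) :=
      isCompact_iff_compactSpace.1 (isClosed_Xtilde hΔ hα hopen).isCompact
    have hU'comp : IsCompact U' := by
      have h1 : IsCompact (Subtype.val '' (Subtype.val ⁻¹' U' : Set ↥(Xtilde α Δ))) :=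
        (hclosed.isCompact).image continuous_subtype_val
      have h2 : Subtype.val '' (Subtype.val ⁻¹' U' : Set ↥(Xtilde α Δ)) = U' := by
        rw [Subtype.image_preimage_coe]
        exact Set.inter_eq_self_of_subset_right hsub
      rwa [h2] at h1
    have hS : IsCompact ((fun q : ℕ → X ⊕ Unit => q 0) '' U') :=
      hU'comp.image (continuous_apply 0)
    have hWc : IsClosed W := by
      have heq : W = Sum.inl ⁻¹' ((fun q : ℕ → X ⊕ Unit => q 0) '' U') := by
        ext x
        constructor
        · rintro ⟨q, hq, hq0⟩
          exact ⟨q, hq, hq0⟩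
        · rintro ⟨q, hq, hq0⟩
          exact ⟨q, hq, hq0⟩
      rw [heq]
      exact hS.isClosed.preimage continuous_inl
    have hWinv : PdsInvariant α Δ W := by
      intro n
      cases n with
      | zero => simp [pdsDom]
      | succ n =>
        ext y
        constructor
        · rintro ⟨x, ⟨⟨q, hqU, hq0⟩, hxd⟩, rfl⟩
          refine ⟨⟨(tShift α)^[n + 1] q,
            inv_fwd_iter hU hqU (mem_tDom_of (hsub hqU) hq0 hxd), ?_⟩, ⟨x, hxd, rfl⟩⟩
          rw [iter_coord_le hq0 (Nat.zero_le _), Nat.sub_zero]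
        · rintro ⟨⟨q, hqU, hq0⟩, hyD⟩
          have hqX := hsub hqU
          have hnz : ∀ m, ∃ w, q m = Sum.inl w := by
            intro m
            induction m with
            | zero => exact ⟨y, hq0⟩
            | succ m ih =>
              obtain ⟨w, hw⟩ := ih
              rcases sum_cases (q (m + 1)) with h | h
              · exact h
              · exact absurd (hαΔ w) (xt_stop hqX hw h)
          obtain ⟨v, hv⟩ := hnz (n + 1)
          have hb : bShift^[n + 1] q ∈ U' := inv_bwd_iter hU hsub hqU hv
          have hb0 : bShift^[n + 1] q 0 = Sum.inl v := by
            rw [bShift_iter_coord, Nat.add_zero]; exact hv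
          have hvd : v ∈ pdsDom α Δ (n + 1) := xt_coord_dom hqX hv
          have hvy : α^[n + 1] v = y := by
            have hcc := xt_coord_chain hqX (n := 0) (k := n + 1) (x := v)
              (by rw [Nat.zero_add]; exact hv)
            rw [hq0] at hcc
            simpa using hcc.symm
          exact ⟨v, ⟨⟨bShift^[n + 1] q, hb, hb0⟩, hvd⟩, hvy⟩
    rcases hmin W hWc hWinv with hWe | hWu
    · exfalso
      have hmem : x₀ ∈ W := ⟨q₀, hq₀, hx₀⟩
      rw [hWe] at hmem
      exact hmem
    · intro x
      have hmem : x ∈ W := by rw [hWu]; trivial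
      exact hmem

end DirLR

/-- A partial dynamical system `(X, α)` with `Δ₋₁` open is minimal iff its
reversible extension `(X̃, α̃)` is minimal. -/
theorem minimal_iff_extension_minimal {X : Type*} [TopologicalSpace X] [CompactSpace X]
    [T2Space X] (Δ : Set X) (hΔ : IsClopen Δ) (α : X → X) (hα : ContinuousOn α Δ)
    (hopen : IsOpen (α '' Δ)) :
    (∀ V : Set X, IsClosed V → PdsInvariant α Δ V → V = ∅ ∨ V = Set.univ) ↔
    (∀ U' : Set (ℕ → X ⊕ Unit), U' ⊆ Xtilde α Δ →
      IsClosed (Subtype.val ⁻¹' U' : Set ↥(Xtilde α Δ)) →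
      PdsInvariant (tShift α) (tDelta1 α Δ) U' →
      U' = ∅ ∨ U' = Xtilde α Δ) := by
  constructor
  · exact dir_lr hΔ hα hopen
  · exact dir_rl hΔ hα hopen
end
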